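/- For every k ≥ 1, the 2k×2k nilpotent Jordan block 𝒥_{2k} is conjugate in GL(2k,ℝ) to a matrix D ∈ 𝔰𝔭(2k,ℝ), i.e. a matrix D satisfying Dᵀ J_k + J_k D = 0 where J_k = [[0, −I_k],[I_k, 0]] in block form. -/

import Mathlib

open Matrix Module

noncomputable section

/-- The `n × n` real nilpotent Jordan block `𝒥ₙ`, with `1`s on the subdiagonal
and `0`s elsewhere. -/
def jordanBlock (n : ℕ) : Matrix (Fin n) (Fin n) ℝ :=
  Matrix.of fun i j => if (i : ℕ) = (j : ℕ) + 1 then 1 else 0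

/-- Two square real matrices with the same index type are conjugate:
`B = P * A * P⁻¹` for some invertible `P`. -/
def MatConj {ι : Type*} [Fintype ι] [DecidableEq ι] (A B : Matrix ι ι ℝ) : Prop :=
  ∃ P : Matrix ι ι ℝ, IsUnit P ∧ B = P * A * P⁻¹

/-- Conjugacy of square real matrices indexed by possibly different (equipotent)
index types: after relabelling the rows/columns of `A` by a bijection, the two
matrices are conjugate. -/
def MatConj' {ι κ : Type*} [Fintype ι] [DecidableEq ι] [Fintype κ] [DecidableEq κ]
    (A : Matrix ι ι ℝ) (B : Matrix κ κ ℝ) : Prop :=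
  ∃ e : ι ≃ κ, MatConj (Matrix.reindex e e A) B

/-- The Lie bracket of the almost abelian Lie algebra `𝔤_A = ℝe₀ ⋉_A ℝ^ι`, on the
underlying vector space `ℝ × (ι → ℝ)`:  `[(t,v),(s,w)] = (0, t • A w − s • A v)`. -/
def aaBracket {ι : Type*} [Fintype ι] (A : Matrix ι ι ℝ) :
    ℝ × (ι → ℝ) → ℝ × (ι → ℝ) → ℝ × (ι → ℝ) :=
  fun x y => (0, x.1 • A.mulVec y.2 - y.1 • A.mulVec x.2)

/-- The almost abelian Lie algebra `𝔤_A` admits a complex structure: a linear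
endomorphism `j` with `j² = -id` whose Nijenhuis tensor vanishes. -/
def HasComplexStructure {ι : Type*} [Fintype ι] (A : Matrix ι ι ℝ) : Prop :=
  ∃ j : (ℝ × (ι → ℝ)) →ₗ[ℝ] ℝ × (ι → ℝ),
    (∀ x, j (j x) = -x) ∧
    (∀ x y, aaBracket A x y + j (aaBracket A (j x) y + aaBracket A x (j y))
        - aaBracket A (j x) (j y) = 0)

/-- The almost abelian Lie algebra `𝔤_A` admits a symplectic structure: a
non-degenerate alternating bilinear form which is closed. -/
def HasSymplecticStructure {ι : Type*} [Fintype ι] (A : Matrix ι ι ℝ) : Prop :=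
  ∃ ω : (ℝ × (ι → ℝ)) →ₗ[ℝ] (ℝ × (ι → ℝ)) →ₗ[ℝ] ℝ,
    (∀ x, ω x x = 0) ∧
    (∀ x, (∀ y, ω x y = 0) → x = 0) ∧
    (∀ x y z, ω (aaBracket A x y) z + ω (aaBracket A y z) x + ω (aaBracket A z x) y = 0)

/-- The standard symplectic matrix `J_k = [[0,-I_k],[I_k,0]]`. -/
def stdSymplJ (k : ℕ) : Matrix (Fin k ⊕ Fin k) (Fin k ⊕ Fin k) ℝ :=
  Matrix.fromBlocks 0 (-1) 1 0

/-- For every `k ≥ 1`, the nilpotent Jordan block `𝒥_{2k}` is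
conjugate to a matrix `D` with `Dᵀ J_k + J_k D = 0`, i.e. `D ∈ 𝔰𝔭(2k,ℝ)`. -/
theorem stmt4 (k : ℕ) (hk : 1 ≤ k) :
    ∃ D : Matrix (Fin k ⊕ Fin k) (Fin k ⊕ Fin k) ℝ,
      Dᵀ * stdSymplJ k + stdSymplJ k * D = 0 ∧
      MatConj' (jordanBlock (2 * k)) D := by
  haveI : NeZero k := ⟨by omega⟩
  set Jk : Matrix (Fin k) (Fin k) ℝ := jordanBlock k with hJk
  set B : Matrix (Fin k) (Fin k) ℝ := Matrix.single 0 0 1 with hBdef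
  have hB : Bᵀ = B := by
    ext i j
    simp [hBdef, Matrix.single, and_comm]
  refine ⟨Matrix.fromBlocks Jk B 0 (-Jkᵀ), ?_, ?_⟩
  · rw [stdSymplJ, Matrix.fromBlocks_transpose, Matrix.fromBlocks_multiply,
      Matrix.fromBlocks_multiply, Matrix.fromBlocks_add]
    simp only [Matrix.mul_zero, Matrix.zero_mul, Matrix.mul_one, Matrix.one_mul,
      Matrix.mul_neg, Matrix.neg_mul, Matrix.mul_one, hB, Matrix.transpose_neg,
      Matrix.transpose_transpose]
    simp only [add_zero, zero_add, neg_add_cancel, add_neg_cancel, neg_neg]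
    ext (i|i) (j|j) <;> simp [Matrix.fromBlocks]
  · refine ⟨((finCongr (two_mul k)).trans finSumFinEquiv.symm).trans
      ((Equiv.sumCongr Fin.revPerm (Equiv.refl (Fin k))).trans (Equiv.sumComm _ _)), ?_⟩
    set S : Matrix (Fin k ⊕ Fin k) (Fin k ⊕ Fin k) ℝ :=
      Matrix.diagonal (Sum.elim (fun _ => (1:ℝ)) (fun a => (-1)^(a:ℕ))) with hS
    have hSS : S * S = 1 := by
      rw [hS, Matrix.diagonal_mul_diagonal]
      ext (i|a) (j|b) <;>
        simp [Matrix.diagonal_apply, Matrix.one_apply, ← pow_add, ← two_mul, pow_mul,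
          Sum.inl.injEq, Sum.inr.injEq]
    refine ⟨S, ⟨⟨S,S,hSS,hSS⟩,rfl⟩, ?_⟩
    rw [Matrix.inv_eq_right_inv hSS]
    ext a b
    have entry : ∀ a b, (Matrix.reindex
        (((finCongr (two_mul k)).trans finSumFinEquiv.symm).trans
          ((Equiv.sumCongr Fin.revPerm (Equiv.refl (Fin k))).trans (Equiv.sumComm _ _)))
        (((finCongr (two_mul k)).trans finSumFinEquiv.symm).trans
          ((Equiv.sumCongr Fin.revPerm (Equiv.refl (Fin k))).trans (Equiv.sumComm _ _)))
        (jordanBlock (2*k))) a b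
        = if (Sum.elim (fun a : Fin k => k + (a:ℕ)) (fun a : Fin k => k - 1 - (a:ℕ)) a)
            = (Sum.elim (fun a : Fin k => k + (a:ℕ)) (fun a : Fin k => k - 1 - (a:ℕ)) b) + 1
          then 1 else 0 := by
      rintro (i|i) (j|j) <;>
        simp [jordanBlock, Equiv.sumComm, Fin.val_rev]
      all_goals exact if_congr (by omega) rfl rfl
    rw [hS, Matrix.mul_diagonal, Matrix.diagonal_mul, entry a b]
    rcases a with i|i <;> rcases b with j|j
    · -- inl inl
      simp [hJk, jordanBlock]
      exact if_congr (by omega) rfl rfl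
    · -- inl inr : B block
      have hj := j.isLt
      by_cases h : k + (i:ℕ) = k - 1 - (j:ℕ) + 1
      · have hi0 : (i:ℕ) = 0 := by omega
        have hj0 : (j:ℕ) = 0 := by omega
        have h1 : i = 0 := Fin.ext (by simpa using hi0)
        have h2 : j = 0 := Fin.ext (by simpa using hj0)
        subst h1; subst h2
        simp [hBdef, Matrix.single, h]
        omega
      · have : ¬((0:Fin k) = i ∧ (0:Fin k) = j) := by
          rintro ⟨h1, h2⟩
          apply h
          rw [← h1, ← h2]
          simp
          omega
        simp [hBdef, Matrix.single, h, this]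
    · -- inr inl : 0 block
      have hi := i.isLt
      have h : ¬(k - 1 - (i:ℕ) = k + (j:ℕ) + 1) := by omega
      simp [h]
    · -- inr inr
      have hi := i.isLt
      have hj := j.isLt
      by_cases h : (j:ℕ) = (i:ℕ) + 1
      · have hc : k - 1 - (i:ℕ) = k - 1 - (j:ℕ) + 1 := by omega
        simp [hJk, jordanBlock, h, hc, pow_succ, ← pow_add, ← two_mul, pow_mul]
      · have hc : ¬(k - 1 - (i:ℕ) = k - 1 - (j:ℕ) + 1) := by omega
        simp [hJk, jordanBlock, h, hc]
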